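/- arXiv:1903.08138 — 5 statements merged into one kernel-verified Lean document; each statement's English description precedes it below -/
import Mathlib

section
/- Let V be a finite set, H ⊆ 2^V \ {∅} a hypergraph with every vertex covered by some edge. Define the height h(x) of x ∈ ℤ≥0^V as the maximum length of a sequence of moves from x, where a move x → x' chooses an edge H₀ ∈ H and strictly decreases x_i for all i ∈ H₀ while leaving other coordinates unchanged. Then for all positions x, x' we have h(x) ≥ h(x') − ‖x' − x‖₊, where ‖x'−x‖₊ = Σ_{i : x'_i > x_i} (x'_i − x_i). In particular h is monotone: x ≥ x' componentwise implies h(x) ≥ h(x'). -/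
/-- A move in hypergraph Nim: choose an edge `E ∈ H`, strictly decrease all
coordinates in `E`, leave all other coordinates unchanged. -/
def Move {V : Type*} (H : Set (Set V)) (x x' : V → ℕ) : Prop :=
  ∃ E ∈ H, (∀ i ∈ E, x' i < x i) ∧ ∀ i ∉ E, x' i = x i

/-- The height of a position: the maximum number of consecutive moves from `x`. -/
noncomputable def height {V : Type*} (H : Set (Set V)) (x : V → ℕ) : ℕ :=
  sSup {n : ℕ | ∃ f : ℕ → V → ℕ, f 0 = x ∧ ∀ i < n, Move H (f i) (f (i + 1))}

lemma move_sum_lt {V : Type*} [Fintype V] {H : Set (Set V)} (hne : ∅ ∉ H)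
    {x x' : V → ℕ} (h : Move H x x') : ∑ i, x' i < ∑ i, x i := by
  obtain ⟨E, hE, hlt, heq⟩ := h
  obtain ⟨v, hv⟩ : E.Nonempty := Set.nonempty_iff_ne_empty.2 (fun h => hne (h ▸ hE))
  apply Finset.sum_lt_sum
  · intro i _
    by_cases hi : i ∈ E
    · exact (hlt i hi).le
    · exact (heq i hi).le
  · exact ⟨v, Finset.mem_univ v, hlt v hv⟩

lemma mem_le_sum {V : Type*} [Fintype V] {H : Set (Set V)} (hne : ∅ ∉ H)
    (x : V → ℕ) {n : ℕ}
    (hn : n ∈ {n : ℕ | ∃ f : ℕ → V → ℕ, f 0 = x ∧ ∀ i < n, Move H (f i) (f (i + 1))}) :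
    n ≤ ∑ i, x i := by
  obtain ⟨f, hf0, hmove⟩ := hn
  have key : ∀ i ≤ n, i + ∑ j, f i j ≤ ∑ j, f 0 j := by
    intro i hi
    induction i with
    | zero => omega
    | succ i ih =>
      have h1 := move_sum_lt hne (hmove i (by omega))
      have h2 := ih (by omega)
      omega
  have := key n le_rfl
  rw [hf0] at this
  omega

lemma bdd {V : Type*} [Fintype V] {H : Set (Set V)} (hne : ∅ ∉ H) (x : V → ℕ) :
    BddAbove {n : ℕ | ∃ f : ℕ → V → ℕ, f 0 = x ∧ ∀ i < n, Move H (f i) (f (i + 1))} :=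
  ⟨∑ i, x i, fun _ hn => mem_le_sum hne x hn⟩

lemma key_lemma {V : Type*} [Fintype V] (H : Set (Set V)) :
    ∀ n : ℕ, ∀ x x' : V → ℕ, ∀ f : ℕ → V → ℕ, f 0 = x' →
      (∀ i < n, Move H (f i) (f (i + 1))) →
      ∃ g : ℕ → V → ℕ, ∃ m : ℕ, g 0 = x ∧ (∀ i < m, Move H (g i) (g (i + 1))) ∧
        n ≤ m + ∑ i, (x' i - x i) := by
  intro n
  induction n with
  | zero => intro x x' f _ _; exact ⟨fun _ => x, 0, rfl, by omega, by omega⟩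
  | succ n ih =>
    intro x x' f hf0 hmove
    obtain ⟨E, hE, hlt, heq⟩ := hmove 0 (Nat.succ_pos n)
    simp only [zero_add] at hlt heq
    by_cases hcase : ∀ j ∈ E, f 1 j < x j
    · classical
      set x₁ : V → ℕ := fun j => if j ∈ E then f 1 j else x j with hx₁
      obtain ⟨g, m, hg0, hgmove, hle⟩ := ih x₁ (f 1) (fun i => f (i + 1)) rfl
        (fun i hi => hmove (i + 1) (by omega))
      refine ⟨fun i => if i = 0 then x else g (i - 1), m + 1, rfl, ?_, ?_⟩
      · intro i hi
        rcases Nat.eq_zero_or_pos i with h0 | h0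
        · subst h0
          simp only [if_pos rfl, if_neg (by omega : (0:ℕ) + 1 ≠ 0)]
          have : g (0 + 1 - 1) = x₁ := by simpa using hg0
          rw [this]
          exact ⟨E, hE, fun j hj => by simp [hx₁, hj, hcase j hj],
            fun j hj => by simp [hx₁, hj]⟩
        · have h1 : i - 1 < m := by omega
          have hm := hgmove (i - 1) h1
          have e : i - 1 + 1 = i := by omega
          rw [e] at hm
          have hi1 : i ≠ 0 := by omega
          have hi2 : i + 1 ≠ 0 := by omega
          simpa [hi1, hi2, e] using hm
      · have hsum : ∑ i, (f 1 i - x₁ i) ≤ ∑ i, (x' i - x i) := by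
          apply Finset.sum_le_sum
          intro j _
          by_cases hj : j ∈ E
          · simp [hx₁, hj]
          · have : f 1 j = x' j := by rw [heq j hj, hf0]
            simp [hx₁, hj, this]
        omega
    · push_neg at hcase
      obtain ⟨j₀, hj₀E, hj₀⟩ := hcase
      obtain ⟨g, m, hg0, hgmove, hle⟩ := ih x (f 1) (fun i => f (i + 1)) rfl
        (fun i hi => hmove (i + 1) (by omega))
      refine ⟨g, m, hg0, hgmove, ?_⟩
      have hstrict : ∑ i, (f 1 i - x i) < ∑ i, (x' i - x i) := by
        apply Finset.sum_lt_sum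
        · intro j _
          have hle' : f 1 j ≤ x' j := by
            by_cases hj : j ∈ E
            · have := hlt j hj; rw [hf0] at this; omega
            · rw [heq j hj, hf0]
          omega
        · refine ⟨j₀, Finset.mem_univ _, ?_⟩
          have h1 := hlt j₀ hj₀E
          rw [hf0] at h1
          omega
      omega

/-- `h(x) ≥ h(x') − ‖x'−x‖₊` where `‖x'−x‖₊ = Σ_{i : x'_i > x_i} (x'_i − x_i)`
(truncated subtraction); in particular `h` is monotone. -/
theorem stmt_7 {V : Type*} [Fintype V] (H : Set (Set V))
    (hne : ∅ ∉ H) (hcov : ∀ v : V, ∃ E ∈ H, v ∈ E) :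
    (∀ x x' : V → ℕ, height H x' ≤ height H x + ∑ i, (x' i - x i)) ∧
    (∀ x x' : V → ℕ, x' ≤ x → height H x' ≤ height H x) := by
  have main : ∀ x x' : V → ℕ, height H x' ≤ height H x + ∑ i, (x' i - x i) := by
    intro x x'
    have h0 : (0:ℕ) ∈ {n : ℕ | ∃ f : ℕ → V → ℕ, f 0 = x' ∧ ∀ i < n, Move H (f i) (f (i + 1))} :=
      ⟨fun _ => x', rfl, by omega⟩
    apply csSup_le ⟨0, h0⟩
    intro n hn
    obtain ⟨f, hf0, hmove⟩ := hn
    obtain ⟨g, m, hg0, hgmove, hle⟩ := key_lemma H n x x' f hf0 hmove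
    have hm : m ≤ height H x := le_csSup (bdd hne x) ⟨g, hg0, hgmove⟩
    omega
  refine ⟨main, fun x x' hxx' => ?_⟩
  have := main x x'
  have hz : ∑ i, (x' i - x i) = 0 :=
    Finset.sum_eq_zero fun i _ => Nat.sub_eq_zero_of_le (hxx' i)
  omega
end

section
/- Let H ⊆ 2^V \ {∅} be a hypergraph and x ∈ ℤ≥0^V a position. If the j-th unit vector e_j is subtracted from x (with x_j ≥ 1), then h(x − e_j) ≥ h(x) − 1, where h is the height function of hypergraph Nim on H. -/
lemma play_mono {V : Type*} (H : Set (Set V)) {y z : V → ℕ} (hyz : ∀ v, y v ≤ z v) {n : ℕ}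
    (hn : ∃ f : ℕ → V → ℕ, f 0 = y ∧ ∀ i < n, Move H (f i) (f (i + 1))) :
    ∃ g : ℕ → V → ℕ, g 0 = z ∧ ∀ i < n, Move H (g i) (g (i + 1)) := by
  obtain ⟨f, hf0, hf⟩ := hn
  refine ⟨fun i v => f i v + (z v - y v), ?_, ?_⟩
  · funext v
    have := hyz v
    simp only [hf0]
    omega
  · intro i hi
    obtain ⟨E, hE, h1, h2⟩ := hf i hi
    refine ⟨E, hE, fun v hv => ?_, fun v hv => ?_⟩
    · show f (i + 1) v + (z v - y v) < f i v + (z v - y v)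
      have := h1 v hv; omega
    · show f (i + 1) v + (z v - y v) = f i v + (z v - y v)
      have := h2 v hv; omega

lemma play_prepend {V : Type*} (H : Set (Set V)) {a b : V → ℕ} (hab : Move H a b) {n : ℕ}
    (hn : ∃ f : ℕ → V → ℕ, f 0 = b ∧ ∀ i < n, Move H (f i) (f (i + 1))) :
    ∃ g : ℕ → V → ℕ, g 0 = a ∧ ∀ i < n + 1, Move H (g i) (g (i + 1)) := by
  obtain ⟨f, hf0, hf⟩ := hn
  refine ⟨fun i => Nat.rec a (fun k _ => f k) i, rfl, ?_⟩
  intro i hi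
  cases i with
  | zero => show Move H a (f 0); rw [hf0]; exact hab
  | succ k => exact hf k (by omega)

lemma play_key {V : Type*} [DecidableEq V] (H : Set (Set V)) (j : V) :
    ∀ n (x : V → ℕ), 1 ≤ x j →
      (∃ f : ℕ → V → ℕ, f 0 = x ∧ ∀ i < n, Move H (f i) (f (i + 1))) →
      ∃ g : ℕ → V → ℕ, g 0 = Function.update x j (x j - 1) ∧
        ∀ i < n - 1, Move H (g i) (g (i + 1)) := by
  intro n
  induction n with
  | zero =>
    intro x _ _
    exact ⟨fun _ => Function.update x j (x j - 1), rfl, by omega⟩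
  | succ m ih =>
    intro x hxj ⟨f, hf0, hf⟩
    have hmove : Move H x (f 1) := by rw [← hf0]; exact hf 0 (by omega)
    obtain ⟨E, hE, h1, h2⟩ := hmove
    have htail : ∃ f' : ℕ → V → ℕ, f' 0 = f 1 ∧ ∀ i < m, Move H (f' i) (f' (i + 1)) :=
      ⟨fun i => f (i + 1), rfl, fun i hi => hf (i + 1) (by omega)⟩
    by_cases hjE : j ∈ E
    · by_cases hlt : f 1 j < x j - 1
      · -- can do the same first move from x - e_j
        have hmove' : Move H (Function.update x j (x j - 1)) (f 1) := by
          refine ⟨E, hE, fun v hv => ?_, fun v hv => ?_⟩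
          · rcases eq_or_ne v j with rfl | hne
            · simpa using hlt
            · rw [Function.update_of_ne hne]; exact h1 v hv
          · have hne : v ≠ j := fun h => hv (h ▸ hjE)
            rw [Function.update_of_ne hne]; exact h2 v hv
        obtain ⟨g, hg0, hg⟩ := play_prepend H hmove' htail
        exact ⟨g, hg0, fun i hi => hg i (by omega)⟩
      · -- f 1 ≤ x - e_j, use monotonicity on the tail
        have hle : ∀ v, f 1 v ≤ Function.update x j (x j - 1) v := by
          intro v
          rcases eq_or_ne v j with rfl | hne
          · have := h1 v hjE; simp; omega
          · rw [Function.update_of_ne hne]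
            by_cases hv : v ∈ E
            · exact le_of_lt (h1 v hv)
            · exact le_of_eq (h2 v hv)
        have := play_mono H hle htail
        obtain ⟨g, hg0, hg⟩ := this
        exact ⟨g, hg0, fun i hi => hg i (by omega)⟩
    · -- j ∉ E : first move doesn't touch j
      have hyj : 1 ≤ f 1 j := by rw [h2 j hjE]; exact hxj
      obtain ⟨g', hg'0, hg'⟩ := ih (f 1) hyj htail
      have hmove' : Move H (Function.update x j (x j - 1))
          (Function.update (f 1) j (f 1 j - 1)) := by
        refine ⟨E, hE, fun v hv => ?_, fun v hv => ?_⟩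
        · have hne : v ≠ j := fun h => hjE (h ▸ hv)
          rw [Function.update_of_ne hne, Function.update_of_ne hne]
          exact h1 v hv
        · rcases eq_or_ne v j with rfl | hne
          · have := h2 v hjE; simp; omega
          · rw [Function.update_of_ne hne, Function.update_of_ne hne]
            exact h2 v hv
      obtain ⟨g, hg0, hg⟩ := play_prepend H hmove' ⟨g', hg'0, hg'⟩
      exact ⟨g, hg0, fun i hi => hg i (by omega)⟩

/-- Decreasing a single coordinate by one decreases the height by at most one:
`h(x − e_j) ≥ h(x) − 1`. -/
theorem stmt_9 {V : Type*} [Fintype V] [DecidableEq V] (H : Set (Set V))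
    (x : V → ℕ) (j : V) (hj : 1 ≤ x j) :
    height H x - 1 ≤ height H (Function.update x j (x j - 1)) := by
  set x' := Function.update x j (x j - 1) with hx'
  set S : (V → ℕ) → Set ℕ :=
    fun y => {n : ℕ | ∃ f : ℕ → V → ℕ, f 0 = y ∧ ∀ i < n, Move H (f i) (f (i + 1))} with hS
  have hx'le : ∀ v, x' v ≤ x v := by
    intro v
    rcases eq_or_ne v j with rfl | hne
    · simp [hx']
    · simp [hx', Function.update_of_ne hne]
  have hsub : S x' ⊆ S x := fun n hn => play_mono H hx'le hn
  by_cases hbdd : BddAbove (S x)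
  · have hne : (S x).Nonempty := ⟨0, fun _ => x, rfl, by omega⟩
    have hmem : sSup (S x) ∈ S x := Nat.sSup_mem hne hbdd
    have hkey := play_key H j (sSup (S x)) x hj hmem
    have : sSup (S x) - 1 ∈ S x' := hkey
    exact le_csSup (hbdd.mono hsub) this
  · have : height H x = 0 := by
      show sSup (S x) = 0
      rw [csSup_of_not_bddAbove hbdd, csSup_empty]
      rfl
    rw [this]
    exact Nat.zero_le _
end

section
/- Let H₁ ⊆ 2^{V₁} and H₂ ⊆ 2^{V₂} be minimal transversal-free hypergraphs on disjoint vertex sets V₁, V₂ (with nonempty edges, every vertex covered). Then the conjunctive compound H = H₁ ⊗ H₂ = {A ∪ B : A ∈ H₁, B ∈ H₂} is minimal transversal-free: H is transversal-free, and for every proper subset S ⊊ V₁ ∪ V₂ with H_S ≠ ∅, the induced subhypergraph H_S = {E ∈ H : E ⊆ S} has a transversal edge. -/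
/-- A hypergraph is transversal-free if every edge is disjoint from some edge. -/
def TransversalFree {α : Type*} (H : Set (Set α)) : Prop :=
  ∀ E ∈ H, ∃ E' ∈ H, E ∩ E' = ∅

/-- The induced subhypergraph on a vertex subset `S`. -/
def Induced {α : Type*} (H : Set (Set α)) (S : Set α) : Set (Set α) :=
  {E ∈ H | E ⊆ S}

/-- A transversal edge of a hypergraph: an edge meeting all edges. -/
def HasTransversalEdge {α : Type*} (H : Set (Set α)) : Prop :=
  ∃ T ∈ H, ∀ E ∈ H, (T ∩ E).Nonempty

/-- Minimal transversal-free hypergraph on vertex set `V`. -/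
def MinimalTransversalFree {α : Type*} (H : Set (Set α)) (V : Set α) : Prop :=
  TransversalFree H ∧
    ∀ S : Set α, S ⊂ V → (Induced H S).Nonempty → HasTransversalEdge (Induced H S)

/-- The conjunctive compound of two hypergraphs. -/
def ConjCompound {α : Type*} (H₁ H₂ : Set (Set α)) : Set (Set α) :=
  {E | ∃ A ∈ H₁, ∃ B ∈ H₂, E = A ∪ B}

/-- The conjunctive compound of minimal transversal-free hypergraphs on disjoint
vertex sets (nonempty edges, all vertices covered) is minimal transversal-free. -/
theorem stmt_11 {α : Type*} (V₁ V₂ : Set α) (hdis : Disjoint V₁ V₂)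
    (H₁ H₂ : Set (Set α))
    (hne₁ : ∅ ∉ H₁) (hne₂ : ∅ ∉ H₂)
    (hcov₁ : ⋃₀ H₁ = V₁) (hcov₂ : ⋃₀ H₂ = V₂)
    (hmtf₁ : MinimalTransversalFree H₁ V₁) (hmtf₂ : MinimalTransversalFree H₂ V₂) :
    MinimalTransversalFree (ConjCompound H₁ H₂) (V₁ ∪ V₂) := by
  have hsub₁ : ∀ A ∈ H₁, A ⊆ V₁ := fun A hA => hcov₁ ▸ Set.subset_sUnion_of_mem hA
  have hsub₂ : ∀ B ∈ H₂, B ⊆ V₂ := fun B hB => hcov₂ ▸ Set.subset_sUnion_of_mem hB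
  constructor
  · -- transversal-free
    rintro E ⟨A, hA, B, hB, rfl⟩
    obtain ⟨A', hA', hAA'⟩ := hmtf₁.1 A hA
    obtain ⟨B', hB', hBB'⟩ := hmtf₂.1 B hB
    refine ⟨A' ∪ B', ⟨A', hA', B', hB', rfl⟩, ?_⟩
    have h1 : A ∩ B' = ∅ := (hdis.mono (hsub₁ A hA) (hsub₂ B' hB')).inter_eq
    have h2 : B ∩ A' = ∅ := ((hdis.symm).mono (hsub₂ B hB) (hsub₁ A' hA')).inter_eq
    rw [Set.union_inter_distrib_right, Set.inter_union_distrib_left,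
      Set.inter_union_distrib_left, hAA', h1, h2, hBB']
    simp
  · -- minimality
    intro S hS ⟨E, hE, hES⟩
    obtain ⟨A, hA, B, hB, rfl⟩ := hE
    have hAS : A ⊆ S ∩ V₁ := Set.subset_inter ((Set.union_subset_iff.mp hES).1) (hsub₁ A hA)
    have hBS : B ⊆ S ∩ V₂ := Set.subset_inter ((Set.union_subset_iff.mp hES).2) (hsub₂ B hB)
    -- a uniform helper: if one side has a meeting edge, we win
    have key : ∀ (T₁ : Set α), T₁ ∈ H₁ → T₁ ⊆ S →
        (∀ A' ∈ H₁, A' ⊆ S ∩ V₁ → (T₁ ∩ A').Nonempty) →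
        ∀ (T₂ : Set α), T₂ ∈ H₂ → T₂ ⊆ S →
        HasTransversalEdge (Induced (ConjCompound H₁ H₂) S) := by
      intro T₁ hT₁ hT₁S hmeet T₂ hT₂ hT₂S
      refine ⟨T₁ ∪ T₂, ⟨⟨T₁, hT₁, T₂, hT₂, rfl⟩, Set.union_subset hT₁S hT₂S⟩, ?_⟩
      rintro E ⟨⟨A', hA', B', hB', rfl⟩, hE'S⟩
      have : A' ⊆ S ∩ V₁ :=
        Set.subset_inter ((Set.union_subset_iff.mp hE'S).1) (hsub₁ A' hA')
      obtain ⟨x, hx1, hx2⟩ := hmeet A' hA' this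
      exact ⟨x, Or.inl hx1, Or.inl hx2⟩
    have key' : ∀ (T₂ : Set α), T₂ ∈ H₂ → T₂ ⊆ S →
        (∀ B' ∈ H₂, B' ⊆ S ∩ V₂ → (T₂ ∩ B').Nonempty) →
        ∀ (T₁ : Set α), T₁ ∈ H₁ → T₁ ⊆ S →
        HasTransversalEdge (Induced (ConjCompound H₁ H₂) S) := by
      intro T₂ hT₂ hT₂S hmeet T₁ hT₁ hT₁S
      refine ⟨T₁ ∪ T₂, ⟨⟨T₁, hT₁, T₂, hT₂, rfl⟩, Set.union_subset hT₁S hT₂S⟩, ?_⟩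
      rintro E ⟨⟨A', hA', B', hB', rfl⟩, hE'S⟩
      have : B' ⊆ S ∩ V₂ :=
        Set.subset_inter ((Set.union_subset_iff.mp hE'S).2) (hsub₂ B' hB')
      obtain ⟨x, hx1, hx2⟩ := hmeet B' hB' this
      exact ⟨x, Or.inr hx1, Or.inr hx2⟩
    by_cases h1 : S ∩ V₁ = V₁
    · -- then S ∩ V₂ ⊊ V₂
      have h2 : S ∩ V₂ ⊂ V₂ := by
        refine ⟨Set.inter_subset_right, fun hcon => hS.2 ?_⟩
        intro x hx
        rcases hx with hx | hx
        · exact (h1.ge hx).1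
        · exact (hcon.ge hx).1
      obtain ⟨T₂, ⟨hT₂, hT₂S⟩, hmeet⟩ :=
        hmtf₂.2 (S ∩ V₂) h2 ⟨B, hB, hBS⟩
      exact key' T₂ hT₂ (hT₂S.trans Set.inter_subset_left)
        (fun B' hB' hB'S => hmeet B' ⟨hB', hB'S⟩) A hA
        ((Set.union_subset_iff.mp hES).1)
    · have h1' : S ∩ V₁ ⊂ V₁ := ⟨Set.inter_subset_right, fun h => h1 (le_antisymm Set.inter_subset_right h)⟩
      obtain ⟨T₁, ⟨hT₁, hT₁S⟩, hmeet⟩ :=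
        hmtf₁.2 (S ∩ V₁) h1' ⟨A, hA, hAS⟩
      exact key T₁ hT₁ (hT₁S.trans Set.inter_subset_left)
        (fun A' hA' hA'S => hmeet A' ⟨hA', hA'S⟩) B hB
        ((Set.union_subset_iff.mp hES).2)
end

section
/- Let H₁ ⊆ 2^{V₁} and H₂ ⊆ 2^{V₂} be hypergraphs on disjoint vertex sets satisfying the chain property. Then their conjunctive compound H₁ ⊗ H₂ = {A ∪ B : A ∈ H₁, B ∈ H₂} also satisfies the chain property. -/
/-- The chain property: any two distinct edges `E ≠ E'` of `H` are connected by
a sequence `C 0 = E, ..., C q = E'` of edges of `H` such that consecutive edges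
intersect, each edge adds exactly one new vertex to the previous one, and all
edges of the chain are contained in `E ∪ E'`. -/
def ChainProperty {α : Type*} (H : Set (Set α)) : Prop :=
  ∀ E ∈ H, ∀ E' ∈ H, E ≠ E' →
    ∃ (q : ℕ) (C : ℕ → Set α),
      C 0 = E ∧ C q = E' ∧ (∀ i ≤ q, C i ∈ H) ∧
      ∀ i < q, (C (i + 1) ∩ C i).Nonempty ∧
        (∃ a, C (i + 1) \ C i = {a}) ∧ C i ⊆ E ∪ E'

lemma union_diff_union_aux {α : Type*} {X Y S : Set α} {a : α}
    (h : X \ Y = {a}) (ha : a ∉ S) : (X ∪ S) \ (Y ∪ S) = {a} := by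
  have h2 : (X ∪ S) \ (Y ∪ S) = (X \ Y) \ S := by
    ext x
    simp only [Set.mem_diff, Set.mem_union, not_or]
    tauto
  rw [h2, h]
  ext x
  simp only [Set.mem_diff, Set.mem_singleton_iff]
  constructor
  · exact fun hx => hx.1
  · rintro rfl; exact ⟨rfl, ha⟩

/-- The conjunctive compound of two hypergraphs with the chain property, on
disjoint vertex sets, also has the chain property. -/
theorem stmt_12 {α : Type*} (V₁ V₂ : Set α) (hdis : Disjoint V₁ V₂)
    (H₁ H₂ : Set (Set α))
    (hs₁ : ∀ A ∈ H₁, A ⊆ V₁) (hs₂ : ∀ B ∈ H₂, B ⊆ V₂)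
    (hc₁ : ChainProperty H₁) (hc₂ : ChainProperty H₂) :
    ChainProperty (ConjCompound H₁ H₂) := by
  rintro E ⟨A, hA, B, hB, rfl⟩ E' ⟨A', hA', B', hB', rfl⟩ hne
  obtain ⟨q₁, C, hC0, hCq, hCmem, hCstep⟩ :
      ∃ (q₁ : ℕ) (C : ℕ → Set α), C 0 = A ∧ C q₁ = A' ∧ (∀ i ≤ q₁, C i ∈ H₁) ∧
        ∀ i < q₁, (C (i + 1) ∩ C i).Nonempty ∧
          (∃ a, C (i + 1) \ C i = {a}) ∧ C i ⊆ A ∪ A' := by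
    by_cases h : A = A'
    · exact ⟨0, fun _ => A, rfl, h ▸ rfl, fun i _ => hA,
        fun i hi => absurd hi (Nat.not_lt_zero i)⟩
    · exact hc₁ A hA A' hA' h
  obtain ⟨q₂, D, hD0, hDq, hDmem, hDstep⟩ :
      ∃ (q₂ : ℕ) (D : ℕ → Set α), D 0 = B ∧ D q₂ = B' ∧ (∀ i ≤ q₂, D i ∈ H₂) ∧
        ∀ i < q₂, (D (i + 1) ∩ D i).Nonempty ∧
          (∃ b, D (i + 1) \ D i = {b}) ∧ D i ⊆ B ∪ B' := by
    by_cases h : B = B'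
    · exact ⟨0, fun _ => B, rfl, h ▸ rfl, fun i _ => hB,
        fun i hi => absurd hi (Nat.not_lt_zero i)⟩
    · exact hc₂ B hB B' hB' h
  refine ⟨q₁ + q₂, fun i => if i ≤ q₁ then C i ∪ B else A' ∪ D (i - q₁), ?_, ?_, ?_, ?_⟩
  · simp [hC0]
  · by_cases h : q₁ + q₂ ≤ q₁
    · have hq2 : q₂ = 0 := by omega
      subst hq2
      rw [hD0] at hDq
      simp only [Nat.add_zero, le_refl, if_pos, hCq, hDq]
    · simp only [if_neg h]
      congr 1
      have h3 : q₁ + q₂ - q₁ = q₂ := by omega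
      rw [h3, hDq]
  · intro i hi
    by_cases h : i ≤ q₁
    · simp only [if_pos h]
      exact ⟨C i, hCmem i h, B, hB, rfl⟩
    · simp only [if_neg h]
      exact ⟨A', hA', D (i - q₁), hDmem _ (by omega), rfl⟩
  · intro i hi
    by_cases h : i < q₁
    · have h1 : i ≤ q₁ := by omega
      have h2 : i + 1 ≤ q₁ := by omega
      simp only [if_pos h1, if_pos h2]
      obtain ⟨hint, ⟨a, ha⟩, hsub⟩ := hCstep i h
      refine ⟨?_, ⟨a, ?_⟩, ?_⟩
      · obtain ⟨x, hx1, hx2⟩ := hint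
        exact ⟨x, Or.inl hx1, Or.inl hx2⟩
      · apply union_diff_union_aux ha
        intro haB
        have haV₁ : a ∈ V₁ := hs₁ _ (hCmem _ h2) (by rw [← Set.singleton_subset_iff, ← ha]; exact Set.diff_subset)
        exact Set.disjoint_left.mp hdis haV₁ (hs₂ B hB haB)
      · exact Set.union_subset_union (hsub.trans (Set.union_subset_union Set.subset_union_left Set.subset_union_left)) le_rfl |>.trans (by
          intro x hx
          rcases hx with hx | hx
          · exact hx
          · exact Or.inl (Or.inr hx))
    · -- i ≥ q₁, second phase
      have hj : i - q₁ < q₂ := by omega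
      have heq : (if i ≤ q₁ then C i ∪ B else A' ∪ D (i - q₁)) = A' ∪ D (i - q₁) := by
        by_cases h' : i ≤ q₁
        · have hiq : i = q₁ := by omega
          subst hiq
          simp only [if_pos h', hCq, Nat.sub_self, hD0]
        · simp [h']
      have heq2 : (if i + 1 ≤ q₁ then C (i + 1) ∪ B else A' ∪ D (i + 1 - q₁)) = A' ∪ D (i - q₁ + 1) := by
        have h5 : ¬ i + 1 ≤ q₁ := by omega
        have h4 : i + 1 - q₁ = i - q₁ + 1 := by omega
        rw [if_neg h5, h4]
      simp only [heq2, heq]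
      obtain ⟨hint, ⟨b, hb⟩, hsub⟩ := hDstep _ hj
      refine ⟨?_, ⟨b, ?_⟩, ?_⟩
      · obtain ⟨x, hx1, hx2⟩ := hint
        exact ⟨x, Or.inr hx1, Or.inr hx2⟩
      · rw [Set.union_comm A' (D (i - q₁ + 1)), Set.union_comm A' (D (i - q₁))]
        apply union_diff_union_aux hb
        intro hbA
        have hbV₂ : b ∈ V₂ := hs₂ _ (hDmem (i - q₁ + 1) (by omega)) (by rw [← Set.singleton_subset_iff, ← hb]; exact Set.diff_subset)
        exact Set.disjoint_left.mp hdis (hs₁ A' hA' hbA) hbV₂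
      · intro x hx
        rcases hx with hx | hx
        · exact Or.inr (Or.inl hx)
        · rcases hsub hx with hx' | hx'
          · exact Or.inl (Or.inr hx')
          · exact Or.inr (Or.inr hx')
end

section
/- Let H₁ ⊆ 2^{V₁}, ..., H_p ⊆ 2^{V_p} be hypergraphs on pairwise disjoint vertex sets, and H = H₁ ⊞ ... ⊞ H_p their selective compound. Then for every position x = (x¹,...,x^p), the height of x in Nim on H equals h₁(x¹) + ... + h_p(x^p). -/
/-- The selective compound of hypergraphs `H i ⊆ 2^{V i}` on pairwise disjoint
vertex sets, realized on the sigma type: all nonempty unions `⋃ i Hⁱ` with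
`Hⁱ ∈ H i ∪ {∅}`. -/
def SelCompound {p : ℕ} {V : Fin p → Type*} (H : ∀ i, Set (Set (V i))) :
    Set (Set (Σ i, V i)) :=
  {E | E ≠ ∅ ∧ ∃ f : ∀ i, Set (V i), (∀ i, f i ∈ H i ∨ f i = ∅) ∧
        E = ⋃ i, Sigma.mk i '' f i}

namespace HeightAux

variable {V : Type*} [Fintype V]

def HSet (H : Set (Set V)) (x : V → ℕ) : Set ℕ :=
  {n : ℕ | ∃ f : ℕ → V → ℕ, f 0 = x ∧ ∀ i < n, Move H (f i) (f (i + 1))}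

lemma height_eq (H : Set (Set V)) (x : V → ℕ) : height H x = sSup (HSet H x) := rfl

lemma zero_mem (H : Set (Set V)) (x : V → ℕ) : 0 ∈ HSet H x :=
  ⟨fun _ => x, rfl, fun i hi => absurd hi (Nat.not_lt_zero i)⟩

lemma move_sum_lt {H : Set (Set V)} (hH : ∀ E ∈ H, E.Nonempty) {x x' : V → ℕ}
    (h : Move H x x') : ∑ v, x' v < ∑ v, x v := by
  obtain ⟨E, hE, hlt, heq⟩ := h
  obtain ⟨v0, hv0⟩ := hH E hE
  refine Finset.sum_lt_sum (fun v _ => ?_) ⟨v0, Finset.mem_univ _, hlt v0 hv0⟩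
  by_cases hv : v ∈ E
  · exact (hlt v hv).le
  · exact (heq v hv).le

lemma bddAbove' {H : Set (Set V)} (hH : ∀ E ∈ H, E.Nonempty) (x : V → ℕ) :
    BddAbove (HSet H x) := by
  refine ⟨∑ v, x v, fun n hn => ?_⟩
  obtain ⟨f, hf0, hf⟩ := hn
  have key : ∀ k, k ≤ n → ∑ v, f k v + k ≤ ∑ v, x v := by
    intro k
    induction k with
    | zero => intro _; simp [hf0]
    | succ k ih =>
      intro hk
      have h1 := ih (Nat.le_of_succ_le hk)
      have h2 := move_sum_lt hH (hf k hk)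
      omega
  have := key n le_rfl
  omega

lemma height_mem {H : Set (Set V)} (hH : ∀ E ∈ H, E.Nonempty) (x : V → ℕ) :
    height H x ∈ HSet H x :=
  Nat.sSup_mem ⟨0, zero_mem H x⟩ (bddAbove' hH x)

lemma le_height {H : Set (Set V)} (hH : ∀ E ∈ H, E.Nonempty) {x : V → ℕ} {n : ℕ}
    (hn : n ∈ HSet H x) : n ≤ height H x :=
  le_csSup (bddAbove' hH x) hn

lemma move_height_succ_le {H : Set (Set V)} (hH : ∀ E ∈ H, E.Nonempty) {x x' : V → ℕ}
    (h : Move H x x') : height H x' + 1 ≤ height H x := by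
  obtain ⟨f, hf0, hf⟩ := height_mem hH x'
  refine le_height hH ⟨fun k => Nat.rec x (fun k _ => f k) k, rfl, ?_⟩
  intro i hi
  cases i with
  | zero => simpa [hf0] using h
  | succ j => exact hf j (by omega)

lemma edges_nonempty {H : Set (Set V)} (hne : ∅ ∉ H) : ∀ E ∈ H, E.Nonempty :=
  fun E hE => Set.nonempty_iff_ne_empty.2 (fun h => hne (h ▸ hE))

variable {p : ℕ} {W : Fin p → Type*} [∀ i, Fintype (W i)]

lemma selcompound_nonempty (H : ∀ i, Set (Set (W i))) :
    ∀ E ∈ SelCompound H, E.Nonempty := fun _ hE => Set.nonempty_iff_ne_empty.2 hE.1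

lemma le_sum_height (H : ∀ i, Set (Set (W i))) (hne : ∀ i, ∅ ∉ H i) :
    ∀ (n : ℕ) (x : (Σ i, W i) → ℕ) (F : ℕ → (Σ i, W i) → ℕ), F 0 = x →
      (∀ k < n, Move (SelCompound H) (F k) (F (k + 1))) →
      n ≤ ∑ i, height (H i) (fun w => x ⟨i, w⟩) := by
  intro n
  induction n with
  | zero => intro _ _ _ _; exact Nat.zero_le _
  | succ n ih =>
    intro x F hF0 hF
    obtain ⟨E, hE, hlt, heq⟩ := hF 0 (Nat.succ_pos n)
    obtain ⟨hEne, g, hg, hEg⟩ := hE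
    set x' := F 1 with hx'
    have hmem : ∀ (j : Fin p) (w : W j), (⟨j, w⟩ : Σ i, W i) ∈ E ↔ w ∈ g j := by
      intro j w
      rw [hEg]
      simp only [Set.mem_iUnion, Set.mem_image]
      constructor
      · rintro ⟨j', v, hv, hv'⟩
        obtain ⟨rfl, h2⟩ := Sigma.mk.inj_iff.1 hv'
        rwa [eq_of_heq h2] at hv
      · intro hw; exact ⟨j, w, hw, rfl⟩
    have moveA : ∀ j : Fin p, (g j).Nonempty →
        Move (H j) (fun w => x ⟨j, w⟩) (fun w => x' ⟨j, w⟩) := by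
      intro j hj
      have hgj : g j ∈ H j := (hg j).resolve_right
        (by rintro h; rw [h] at hj; exact Set.not_nonempty_empty hj)
      refine ⟨g j, hgj, ?_, ?_⟩
      · intro w hw
        have := hlt ⟨j, w⟩ ((hmem j w).2 hw)
        rwa [hF0] at this
      · intro w hw
        have := heq ⟨j, w⟩ (fun h => hw ((hmem j w).1 h))
        rwa [hF0] at this
    have moveB : ∀ j : Fin p, ¬(g j).Nonempty →
        (fun w => x' ⟨j, w⟩) = (fun w => x ⟨j, w⟩) := by
      intro j hj
      funext w
      have hw : (⟨j, w⟩ : Σ i, W i) ∉ E := fun h => hj ⟨w, (hmem j w).1 h⟩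
      have := heq _ hw
      rwa [hF0] at this
    obtain ⟨s0, hs0⟩ := Set.nonempty_iff_ne_empty.2 hEne
    obtain ⟨j0, w0⟩ := s0
    have hgs0 : (g j0).Nonempty := ⟨w0, (hmem j0 w0).1 hs0⟩
    have hle : ∀ j : Fin p,
        height (H j) (fun w => x' ⟨j, w⟩) ≤ height (H j) (fun w => x ⟨j, w⟩) := by
      intro j
      by_cases hj : (g j).Nonempty
      · exact Nat.le_of_succ_le (move_height_succ_le (edges_nonempty (hne j)) (moveA j hj))
      · rw [moveB j hj]
    have hlt0 : height (H j0) (fun w => x' ⟨j0, w⟩) < height (H j0) (fun w => x ⟨j0, w⟩) :=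
      move_height_succ_le (edges_nonempty (hne j0)) (moveA j0 hgs0)
    have hsum : ∑ i, height (H i) (fun w => x' ⟨i, w⟩)
        < ∑ i, height (H i) (fun w => x ⟨i, w⟩) :=
      Finset.sum_lt_sum (fun i _ => hle i) ⟨j0, Finset.mem_univ _, hlt0⟩
    have hih := ih x' (fun k => F (k + 1)) rfl (fun k hk => hF (k + 1) (by omega))
    omega

lemma sum_mem (H : ∀ i, Set (Set (W i))) (hne : ∀ i, ∅ ∉ H i) (x : (Σ i, W i) → ℕ) :
    (∑ i, height (H i) (fun w => x ⟨i, w⟩)) ∈ HSet (SelCompound H) x := by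
  have hwit : ∀ i : Fin p, ∃ f : ℕ → W i → ℕ, f 0 = (fun w => x ⟨i, w⟩) ∧
      ∀ k < height (H i) (fun w => x ⟨i, w⟩), Move (H i) (f k) (f (k + 1)) :=
    fun i => height_mem (edges_nonempty (hne i)) _
  choose f hf0 hfm using hwit
  set n : Fin p → ℕ := fun i => height (H i) (fun w => x ⟨i, w⟩) with hn
  set N : ℕ → ℕ := fun k => ∑ j ∈ Finset.univ.filter (fun j : Fin p => (j : ℕ) < k), n j
    with hN
  have hN0 : N 0 = 0 := by simp [hN]
  have hNmono : ∀ a b, a ≤ b → N a ≤ N b := by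
    intro a b hab
    apply Finset.sum_le_sum_of_subset
    intro j
    simp only [Finset.mem_filter, Finset.mem_univ, true_and]
    omega
  have hNsucc : ∀ m (hm : m < p), N (m + 1) = N m + n ⟨m, hm⟩ := by
    intro m hm
    have hins : Finset.univ.filter (fun j : Fin p => (j : ℕ) < m + 1)
        = insert (⟨m, hm⟩ : Fin p) (Finset.univ.filter (fun j : Fin p => (j : ℕ) < m)) := by
      ext j
      simp only [Finset.mem_filter, Finset.mem_univ, true_and, Finset.mem_insert, Fin.ext_iff]
      omega
    simp only [hN]
    rw [hins, Finset.sum_insert (by simp)]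
    omega
  have hNp : N p = ∑ i, n i := by
    simp only [hN]
    congr 1
    ext j
    simp [j.isLt]
  suffices h : N p ∈ HSet (SelCompound H) x by rwa [hNp] at h
  refine ⟨fun k s => f s.1 (min (k - N s.1) (n s.1)) s.2, ?_, ?_⟩
  · funext s
    obtain ⟨i, w⟩ := s
    show f i (min (0 - N i) (n i)) w = x ⟨i, w⟩
    rw [Nat.zero_sub, Nat.zero_min]
    exact congrFun (hf0 i) w
  · intro k hk
    have hp0 : 0 < p := by
      by_contra h
      have hp : p = 0 := by omega
      rw [hp, hN0] at hk
      omega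
    have hfind : ∃ i : Fin p, N ↑i ≤ k ∧ k < N ↑i + n i := by
      have hPex : ∃ m, k < N (m + 1) :=
        ⟨p - 1, by have e : p - 1 + 1 = p := Nat.sub_add_cancel hp0; rw [e]; exact hk⟩
      have hkm : k < N (Nat.find hPex + 1) := Nat.find_spec hPex
      have hmlt : Nat.find hPex < p := by
        have := Nat.find_min' hPex (m := p - 1)
          (by have e : p - 1 + 1 = p := Nat.sub_add_cancel hp0; rw [e]; exact hk)
        omega
      refine ⟨⟨Nat.find hPex, hmlt⟩, ?_, ?_⟩
      · rcases Nat.eq_zero_or_pos (Nat.find hPex) with h0 | h0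
        · simp only [h0]
          rw [hN0]
          exact Nat.zero_le k
        · have hmin := Nat.find_min hPex (m := Nat.find hPex - 1) (by omega)
          have e : Nat.find hPex - 1 + 1 = Nat.find hPex := Nat.sub_add_cancel h0
          rw [e] at hmin
          simpa using Nat.le_of_not_lt hmin
      · have := hNsucc (Nat.find hPex) hmlt
        simp only [this] at hkm
        exact hkm
    obtain ⟨i, hNmk, hklt⟩ := hfind
    have ht : k - N ↑i < n i := by omega
    obtain ⟨E, hEi, hltE, heqE⟩ := hfm i (k - N ↑i) ht
    have hEne : E.Nonempty := edges_nonempty (hne i) E hEi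
    have hsub1 : min (k - N ↑i) (n i) = k - N ↑i := Nat.min_eq_left ht.le
    have hsub2 : min (k + 1 - N ↑i) (n i) = k - N ↑i + 1 := by
      have e : k + 1 - N ↑i = (k - N ↑i) + 1 := by omega
      rw [e]
      exact Nat.min_eq_left ht
    refine ⟨Sigma.mk i '' E, ⟨(hEne.image _).ne_empty,
      fun j => Sigma.mk j ⁻¹' (Sigma.mk i '' E), ?_, ?_⟩, ?_, ?_⟩
    · intro j
      by_cases hji : j = i
      · subst hji
        left
        show Sigma.mk j ⁻¹' (Sigma.mk j '' E) ∈ H j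
        rw [Set.preimage_image_eq E sigma_mk_injective]
        exact hEi
      · right
        show Sigma.mk j ⁻¹' (Sigma.mk i '' E) = ∅
        ext v
        simp only [Set.mem_preimage, Set.mem_image, Set.mem_empty_iff_false, iff_false]
        rintro ⟨u, hu, hv⟩
        exact hji (congrArg Sigma.fst hv).symm
    · apply Set.Subset.antisymm
      · have heqq : Sigma.mk i '' (Sigma.mk i ⁻¹' (Sigma.mk i '' E)) = Sigma.mk i '' E := by
          rw [Set.preimage_image_eq _ sigma_mk_injective]
        calc Sigma.mk i '' E = Sigma.mk i '' (Sigma.mk i ⁻¹' (Sigma.mk i '' E)) := heqq.symm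
          _ ⊆ _ := Set.subset_iUnion
            (fun j => Sigma.mk j '' (Sigma.mk j ⁻¹' (Sigma.mk i '' E))) i
      · exact Set.iUnion_subset fun j => Set.image_preimage_subset _ _
    · rintro s ⟨u, hu, rfl⟩
      show f i (min (k + 1 - N ↑i) (n i)) u < f i (min (k - N ↑i) (n i)) u
      rw [hsub1, hsub2]
      exact hltE u hu
    · intro s hs
      obtain ⟨j, w⟩ := s
      show f j (min (k + 1 - N ↑j) (n j)) w = f j (min (k - N ↑j) (n j)) w
      by_cases hji : j = i
      · subst hji
        have hw : w ∉ E := fun h => hs ⟨w, h, rfl⟩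
        rw [hsub1, hsub2]
        exact heqE w hw
      · have hjm : (j : ℕ) ≠ (i : ℕ) := fun h => hji (Fin.ext h)
        rcases lt_or_gt_of_ne hjm with hlt' | hgt'
        · have h1 : N ((j : ℕ) + 1) ≤ N ↑i := hNmono _ _ (by omega)
          have h2 : N ((j : ℕ) + 1) = N ↑j + n ⟨(j : ℕ), j.isLt⟩ := hNsucc _ j.isLt
          have h3 : (⟨(j : ℕ), j.isLt⟩ : Fin p) = j := rfl
          rw [h3] at h2
          have hmm : min (k + 1 - N ↑j) (n j) = min (k - N ↑j) (n j) := by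
            rw [Nat.min_eq_right (by omega), Nat.min_eq_right (by omega)]
          rw [hmm]
        · have h1 : N ((i : ℕ) + 1) ≤ N ↑j := hNmono _ _ (by omega)
          have h2 := hNsucc (i : ℕ) i.isLt
          have h3 : (⟨(i : ℕ), i.isLt⟩ : Fin p) = i := rfl
          rw [h3] at h2
          have hmm : min (k + 1 - N ↑j) (n j) = min (k - N ↑j) (n j) := by
            have e1 : k + 1 - N ↑j = 0 := by omega
            have e2 : k - N ↑j = 0 := by omega
            rw [e1, e2]
          rw [hmm]

end HeightAux

/-- The height of a position in the selective compound is the sum of the heights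
of its components. -/
theorem stmt_14 {p : ℕ} {V : Fin p → Type*} [∀ i, Fintype (V i)]
    (H : ∀ i, Set (Set (V i))) (hne : ∀ i, ∅ ∉ H i) :
    ∀ x : (Σ i, V i) → ℕ,
      height (SelCompound H) x = ∑ i, height (H i) (fun w => x ⟨i, w⟩) := by
  intro x
  apply le_antisymm
  · obtain ⟨F, hF0, hF⟩ := HeightAux.height_mem (HeightAux.selcompound_nonempty H) x
    exact HeightAux.le_sum_height H hne _ x F hF0 hF
  · exact HeightAux.le_height (HeightAux.selcompound_nonempty H) (HeightAux.sum_mem H hne x)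
end
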